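/- Let H = H₀ ⊕ H₁ be a complex Hilbert space written as the orthogonal direct sum of two closed subspaces, let n ∈ {0,1}, and let J be a unitary operator on H with J(H_i) ⊆ H_{i+n mod 2} and J²x = (−1)^{(n+1)i} x for all x ∈ H_i. For a bounded operator T homogeneous of degree t ∈ {0,1}, define T† on x ∈ H_i by T†x = (−1)^{(n+1)(t+i)+ti} J T* J x (extended additively), where T* is the Hilbert adjoint. Then the superadjoint is a superinvolution: (a) T† is again homogeneous of degree t; (b) (T†)† = T; (c) for bounded homogeneous operators S of degree s and T of degree t, (S∘T)† = (−1)^{st} T† ∘ S†; (d) T ↦ T† is conjugate-linear. -/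

import Mathlib

open ContinuousLinearMap

noncomputable section

variable {H : Type*} [NormedAddCommGroup H] [InnerProductSpace ℂ H] [CompleteSpace H]

/-- `Td` is the superadjoint of the homogeneous operator `T` of degree `t` on the Hilbert
superspace `(H, J)` of parity `n`, graded by `Hsub`: on `x ∈ H_i`,
`T†x = (−1)^{(n+1)(t+i)+ti} J T* J x`, extended additively. -/
def IsSuperadjointOf (Hsub : Fin 2 → Submodule ℂ H) (n : Fin 2) (J : H →L[ℂ] H)
    (T : H →L[ℂ] H) (t : Fin 2) (Td : H →L[ℂ] H) : Prop :=
  ∀ i : Fin 2, ∀ x ∈ Hsub i,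
    Td x = ((-1 : ℂ)) ^ (((n : ℕ) + 1) * ((t : ℕ) + (i : ℕ)) + (t : ℕ) * (i : ℕ)) •
      J ((adjoint T) (J x))

/-- On a Hilbert superspace `(H = H₀ ⊕ H₁, J)` of parity `n`, every bounded
homogeneous operator `T` of degree `t` has a unique superadjoint `T†`, and the superadjoint is
a superinvolution: (a) `T†` is homogeneous of degree `t`; (b) `(T†)† = T`;
(c) `(S∘T)† = (−1)^{st} T†∘S†`; (d) `T ↦ T†` is conjugate-linear. -/
theorem superadjoint_superinvolution
    (Hsub : Fin 2 → Submodule ℂ H)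
    (hclosed : ∀ i, IsClosed (Hsub i : Set H))
    (horth : ∀ x ∈ Hsub 0, ∀ y ∈ Hsub 1, (inner ℂ x y : ℂ) = 0)
    (hspan : ∀ x : H, ∃ x₀ ∈ Hsub 0, ∃ x₁ ∈ Hsub 1, x = x₀ + x₁)
    (n : Fin 2) (J : H →L[ℂ] H)
    (hJinner : ∀ x y : H, (inner ℂ (J x) (J y) : ℂ) = inner ℂ x y)
    (hJsurj : Function.Surjective J)
    (hJgrade : ∀ i : Fin 2, ∀ x ∈ Hsub i, J x ∈ Hsub (i + n))
    (hJsq : ∀ i : Fin 2, ∀ x ∈ Hsub i,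
      J (J x) = ((-1 : ℂ)) ^ (((n : ℕ) + 1) * (i : ℕ)) • x)
    (T : H →L[ℂ] H) (t : Fin 2)
    (hT : ∀ i : Fin 2, ∀ x ∈ Hsub i, T x ∈ Hsub (i + t)) :
    (∃! Td : H →L[ℂ] H, IsSuperadjointOf Hsub n J T t Td) ∧
    ∀ Td : H →L[ℂ] H, IsSuperadjointOf Hsub n J T t Td →
      -- (a) `T†` is homogeneous of degree `t`
      (∀ i : Fin 2, ∀ x ∈ Hsub i, Td x ∈ Hsub (i + t)) ∧
      -- (b) `(T†)† = T`
      (∀ Tdd : H →L[ℂ] H, IsSuperadjointOf Hsub n J Td t Tdd → Tdd = T) ∧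
      -- (c) `(S∘T)† = (−1)^{st} T† ∘ S†`
      (∀ (s : Fin 2) (S : H →L[ℂ] H), (∀ i : Fin 2, ∀ x ∈ Hsub i, S x ∈ Hsub (i + s)) →
        ∀ Sd : H →L[ℂ] H, IsSuperadjointOf Hsub n J S s Sd →
        ∀ STd : H →L[ℂ] H, IsSuperadjointOf Hsub n J (S ∘L T) (s + t) STd →
          STd = ((-1 : ℂ)) ^ ((s : ℕ) * (t : ℕ)) • (Td ∘L Sd)) ∧
      -- (d) conjugate-linearity of `T ↦ T†`
      (∀ (c : ℂ) (cTd : H →L[ℂ] H), IsSuperadjointOf Hsub n J (c • T) t cTd →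
        cTd = (starRingEnd ℂ c) • Td) ∧
      (∀ T' Td' : H →L[ℂ] H, (∀ i : Fin 2, ∀ x ∈ Hsub i, T' x ∈ Hsub (i + t)) →
        IsSuperadjointOf Hsub n J T' t Td' →
        ∀ Sd : H →L[ℂ] H, IsSuperadjointOf Hsub n J (T + T') t Sd →
          Sd = Td + Td') := by
  classical
  -- index arithmetic facts
  have hidx1 : ∀ a b c : Fin 2, a + b + c + b = a + c := by decide
  have hne2 : ∀ a b : Fin 2, a ≠ a + b + 1 + b := by decide
  have hneg : ∀ m : ℕ, ((-1 : ℂ)) ^ m * ((-1 : ℂ)) ^ m = 1 := by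
    intro m; rw [← mul_pow]; norm_num
  have hconjpow : ∀ m : ℕ, (starRingEnd ℂ) (((-1 : ℂ)) ^ m) = ((-1 : ℂ)) ^ m := by
    intro m; simp
  -- orthogonality in both orders
  have horth' : ∀ i k : Fin 2, i ≠ k → ∀ x ∈ Hsub i, ∀ y ∈ Hsub k, (inner ℂ x y : ℂ) = 0 := by
    intro i k hik x hx y hy
    fin_cases i <;> fin_cases k
    · exact absurd rfl hik
    · exact horth x hx y hy
    · rw [← inner_conj_symm, horth y hy x hx]; exact map_zero _
    · exact absurd rfl hik
  -- membership of a component from orthogonality to the opposite component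
  have hcomp : ∀ (m : Fin 2) (z : H), (∀ w ∈ Hsub (m + 1), (inner ℂ z w : ℂ) = 0) → z ∈ Hsub m := by
    intro m z hz
    obtain ⟨z₀, h0, z₁, h1, rfl⟩ := hspan z
    fin_cases m
    · have h01 : (inner ℂ (z₀ + z₁) z₁ : ℂ) = 0 := hz z₁ h1
      rw [inner_add_left, horth z₀ h0 z₁ h1, zero_add] at h01
      have hz1 : z₁ = 0 := inner_self_eq_zero.mp h01
      simpa [hz1] using h0
    · have h00 : (inner ℂ (z₀ + z₁) z₀ : ℂ) = 0 := hz z₀ h0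
      rw [inner_add_left, horth' 1 0 (by decide) z₁ h1 z₀ h0, add_zero] at h00
      have hz0 : z₀ = 0 := inner_self_eq_zero.mp h00
      simpa [hz0] using h1
  -- extensionality from the two components
  have hext : ∀ A B : H →L[ℂ] H, (∀ i : Fin 2, ∀ x ∈ Hsub i, A x = B x) → A = B := by
    intro A B h
    ext x
    obtain ⟨x₀, h0, x₁, h1, rfl⟩ := hspan x
    rw [map_add, map_add, h 0 x₀ h0, h 1 x₁ h1]
  -- the adjoint of a homogeneous operator is homogeneous of the same degree
  have hadjgr : ∀ (A : H →L[ℂ] H) (a : Fin 2),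
      (∀ i : Fin 2, ∀ x ∈ Hsub i, A x ∈ Hsub (i + a)) →
      ∀ j : Fin 2, ∀ y ∈ Hsub j, adjoint A y ∈ Hsub (j + a) := by
    intro A a hA j y hy
    apply hcomp
    intro w hw
    rw [adjoint_inner_left]
    exact horth' j (j + a + 1 + a) (hne2 j a) y hy (A w) (hA (j + a + 1) w hw)
  -- existence of the superadjoint
  haveI : CompleteSpace (Hsub 0) := (hclosed 0).completeSpace_coe
  have h1orth : Hsub 1 = (Hsub 0)ᗮ := by
    apply le_antisymm
    · intro y hy
      rw [Submodule.mem_orthogonal]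
      intro x hx
      exact horth x hx y hy
    · intro y hy
      obtain ⟨y₀, h0, y₁, h1, rfl⟩ := hspan y
      have hy₁ : y₁ ∈ (Hsub 0)ᗮ := by
        rw [Submodule.mem_orthogonal]; intro x hx; exact horth x hx y₁ h1
      have h0' : y₀ ∈ (Hsub 0)ᗮ := by
        have := Submodule.sub_mem _ hy hy₁
        simpa using this
      have hz : y₀ = 0 :=
        inner_self_eq_zero.mp (((Submodule.mem_orthogonal _ _).mp h0') y₀ h0)
      simpa [hz] using h1
  set P : H →L[ℂ] H := (Hsub 0).subtypeL ∘L Submodule.orthogonalProjectionOnto (Hsub 0) with hPdef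
  have hP0 : ∀ x ∈ Hsub 0, P x = x := by
    intro x hx
    simp [hPdef, Submodule.starProjection_eq_self_iff.mpr hx, ← Submodule.starProjection_apply]
  have hP1 : ∀ x ∈ Hsub 1, P x = 0 := by
    intro x hx
    have hx' : x ∈ (Hsub 0)ᗮ := h1orth ▸ hx
    simp [hPdef, Submodule.orthogonalProjectionOnto_apply_of_mem_orthogonal hx']
  set A0 : H →L[ℂ] H := (J ∘L adjoint T) ∘L J with hA0
  set Td₀ : H →L[ℂ] H :=
      (((-1 : ℂ)) ^ (((n : ℕ) + 1) * ((t : ℕ) + ((0 : Fin 2) : ℕ)) + (t : ℕ) * ((0 : Fin 2) : ℕ))) •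
        (A0 ∘L P)
    + (((-1 : ℂ)) ^ (((n : ℕ) + 1) * ((t : ℕ) + ((1 : Fin 2) : ℕ)) + (t : ℕ) * ((1 : Fin 2) : ℕ))) •
        (A0 ∘L (ContinuousLinearMap.id ℂ H - P)) with hTd₀
  have hTd₀spec : IsSuperadjointOf Hsub n J T t Td₀ := by
    intro i x hx
    fin_cases i
    · have hp := hP0 x hx
      simp [hTd₀, hA0, hp]
    · have hp := hP1 x hx
      simp [hTd₀, hA0, hp]
  refine ⟨⟨Td₀, hTd₀spec, ?_⟩, ?_⟩
  · intro Y hY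
    exact hext Y Td₀ fun i x hx => (hY i x hx).trans (hTd₀spec i x hx).symm
  intro Td hTd
  have parta : ∀ i : Fin 2, ∀ x ∈ Hsub i, Td x ∈ Hsub (i + t) := by
    intro i x hx
    rw [hTd i x hx]
    refine Submodule.smul_mem _ _ ?_
    have h3 := hJgrade (i + n + t) _ (hadjgr T t hT (i + n) _ (hJgrade i x hx))
    rw [hidx1 i n t] at h3
    exact h3
  refine ⟨parta, ?_, ?_, ?_, ?_⟩
  -- (b)
  · intro Tdd hTdd
    have key : ∀ i : Fin 2, ∀ x ∈ Hsub i, adjoint Td (J x) =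
        (((-1 : ℂ)) ^ (((n : ℕ) + 1) * ((t : ℕ) + ((i + t + n : Fin 2) : ℕ)) +
            (t : ℕ) * ((i + t + n : Fin 2) : ℕ)) *
         ((-1 : ℂ)) ^ (((n : ℕ) + 1) * (((i + t : Fin 2)) : ℕ))) • J (T x) := by
      intro i x hx
      have hTx : T x ∈ Hsub (i + t) := hT i x hx
      have hJTx : J (T x) ∈ Hsub (i + t + n) := hJgrade (i + t) _ hTx
      have main : ∀ k : Fin 2, ∀ w ∈ Hsub k, (inner ℂ (adjoint Td (J x)) w : ℂ) =
          inner ℂ ((((-1 : ℂ)) ^ (((n : ℕ) + 1) * ((t : ℕ) + ((i + t + n : Fin 2) : ℕ)) +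
              (t : ℕ) * ((i + t + n : Fin 2) : ℕ)) *
            ((-1 : ℂ)) ^ (((n : ℕ) + 1) * (((i + t : Fin 2)) : ℕ))) • J (T x)) w := by
        intro k w hw
        have h2 : (inner ℂ (T x) (J w) : ℂ) =
            ((-1 : ℂ)) ^ (((n : ℕ) + 1) * (((i + t : Fin 2)) : ℕ)) * inner ℂ (J (T x)) w := by
          have h1 : (inner ℂ (J (J (T x))) (J w) : ℂ) = inner ℂ (J (T x)) w := hJinner _ _
          rw [hJsq (i + t) (T x) hTx, inner_smul_left, hconjpow] at h1
          calc (inner ℂ (T x) (J w) : ℂ)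
              = (((-1 : ℂ)) ^ (((n : ℕ) + 1) * (((i + t : Fin 2)) : ℕ)) *
                 ((-1 : ℂ)) ^ (((n : ℕ) + 1) * (((i + t : Fin 2)) : ℕ))) * inner ℂ (T x) (J w) := by
                rw [hneg]; ring
            _ = ((-1 : ℂ)) ^ (((n : ℕ) + 1) * (((i + t : Fin 2)) : ℕ)) *
                (((-1 : ℂ)) ^ (((n : ℕ) + 1) * (((i + t : Fin 2)) : ℕ)) * inner ℂ (T x) (J w)) := by
                ring
            _ = _ := by rw [h1]
        rw [adjoint_inner_left, hTd k w hw, inner_smul_right, hJinner, adjoint_inner_right, h2,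
          inner_smul_left, map_mul, hconjpow, hconjpow]
        by_cases hk : k = i + t + n
        · subst hk; ring
        · rw [horth' (i + t + n) k (fun h => hk h.symm) _ hJTx w hw]
          ring
      apply ext_inner_right ℂ
      intro v
      obtain ⟨w₀, hw0, w₁, hw1, rfl⟩ := hspan v
      rw [inner_add_right, inner_add_right, main 0 w₀ hw0, main 1 w₁ hw1]
    apply hext
    intro i x hx
    rw [hTdd i x hx, key i x hx, map_smul, hJsq (i + t) (T x) (hT i x hx), smul_smul, smul_smul]
    conv_rhs => rw [← one_smul ℂ (T x)]
    congr 1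
    clear * -
    fin_cases n <;> fin_cases t <;> fin_cases i <;>
      norm_num [show ((2 : Fin 2) : ℕ) = 0 from rfl, show ((3 : Fin 2) : ℕ) = 1 from rfl,
        show ((4 : Fin 2) : ℕ) = 0 from rfl, show ((1 + 1 : Fin 2) : ℕ) = 0 from rfl,
        show ((1 + 1 + 1 : Fin 2) : ℕ) = 1 from rfl]
  -- (c)
  · intro s S hS Sd hSd STd hSTd
    apply hext
    intro i x hx
    have hJx : J x ∈ Hsub (i + n) := hJgrade i x hx
    have hSJx : adjoint S (J x) ∈ Hsub (i + n + s) := hadjgr S s hS (i + n) _ hJx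
    have hJSJx : J (adjoint S (J x)) ∈ Hsub (i + s) := by
      have := hJgrade (i + n + s) _ hSJx
      rwa [hidx1 i n s] at this
    rw [hSTd i x hx, adjoint_comp]
    simp only [smul_apply, comp_apply]
    rw [hSd i x hx, map_smul, hTd (i + s) _ hJSJx, hJsq (i + n + s) _ hSJx]
    simp only [map_smul, smul_smul]
    congr 1
    clear * -
    fin_cases n <;> fin_cases s <;> fin_cases t <;> fin_cases i <;>
      norm_num [show ((2 : Fin 2) : ℕ) = 0 from rfl, show ((3 : Fin 2) : ℕ) = 1 from rfl,
        show ((4 : Fin 2) : ℕ) = 0 from rfl, show ((1 + 1 : Fin 2) : ℕ) = 0 from rfl,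
        show ((1 + 1 + 1 : Fin 2) : ℕ) = 1 from rfl]
  -- (d) scalar
  · intro c cTd hc
    have hadjsmul : adjoint (c • T) = (starRingEnd ℂ c) • adjoint T := adjoint.map_smulₛₗ c T
    apply hext
    intro i x hx
    rw [hc i x hx, hadjsmul]
    simp only [smul_apply, map_smul, hTd i x hx, smul_smul]
    congr 1
    ring
  -- (d) additive
  · intro T' Td' hT' hTd' Sd hSd
    have hadd : adjoint (T + T') = adjoint T + adjoint T' := map_add _ T T'
    apply hext
    intro i x hx
    rw [hSd i x hx, hadd]
    simp only [add_apply, map_add, smul_add]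
    rw [hTd i x hx, hTd' i x hx]
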